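/- Let A be an n×n Hermitian matrix over ℍ. Then for every real number t, det(tI − A) = t^n − d₁ t^{n−1} + d₂ t^{n−2} − ⋯ + (−1)^n d_n, where for 1 ≤ k ≤ n, d_k = Σ_{β∈J_{k,n}} |A_β^β| is the sum of all principal minors of A of order k (in particular d_n = det A). -/

import Mathlib

open Quaternion Matrix Finset

noncomputable section

/-- Ordered product of the entries of `A` along the cycle of `σ` containing `x`,
starting at `x`:  `a_{x,σx} · a_{σx,σ²x} ⋯ a_{σ^{c-1}x,x}`. -/
def cycProd {n : ℕ} (A : Matrix (Fin n) (Fin n) ℍ[ℝ]) (σ : Equiv.Perm (Fin n))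
    (x : Fin n) : ℍ[ℝ] :=
  ((List.range (Function.minimalPeriod (⇑σ) x)).map
    (fun t => A ((⇑σ)^[t] x) ((⇑σ)^[t + 1] x))).prod

/-- `x` is the smallest element of its `σ`-cycle. -/
def isLeaderB {n : ℕ} (σ : Equiv.Perm (Fin n)) (x : Fin n) : Bool :=
  (List.range n).all fun t => decide (x ≤ (⇑σ)^[t] x)

/-- `x` lies in the `σ`-cycle of `i`. -/
def inCycleB {n : ℕ} (σ : Equiv.Perm (Fin n)) (i x : Fin n) : Bool :=
  (List.range n).any fun t => decide ((⇑σ)^[t] i = x)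

/-- The increasing list of the smallest elements of the `σ`-cycles other than
the cycle of `i`. -/
def leaders {n : ℕ} (σ : Equiv.Perm (Fin n)) (i : Fin n) : List (Fin n) :=
  (List.finRange n).filter fun x => isLeaderB σ x && !(inCycleB σ i x)

/-- The `i`-th row determinant of a quaternion matrix: the sum over all
permutations, written in left-ordered cycle notation (the cycle of `i` first,
starting with `i`; every other cycle starting with its smallest element, these
smallest elements increasing from left to right), of the sign times the ordered
product of the corresponding entries. -/
def rdet {n : ℕ} (A : Matrix (Fin n) (Fin n) ℍ[ℝ]) (i : Fin n) : ℍ[ℝ] :=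
  ∑ σ : Equiv.Perm (Fin n),
    ((Equiv.Perm.sign σ : ℤ) : ℍ[ℝ]) *
      (cycProd A σ i * ((leaders σ i).map (cycProd A σ)).prod)

/-- The `j`-th column determinant of a quaternion matrix: the sum over all
permutations, written in right-ordered cycle notation (the cycle of `j` last,
ending with `j`; every other cycle ending with its smallest element, these
smallest elements increasing from right to left), of the sign times the ordered
product of the corresponding entries. -/
def cdet {n : ℕ} (A : Matrix (Fin n) (Fin n) ℍ[ℝ]) (j : Fin n) : ℍ[ℝ] :=
  ∑ τ : Equiv.Perm (Fin n),
    ((Equiv.Perm.sign τ : ℤ) : ℍ[ℝ]) *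
      ((((leaders τ j).reverse).map (cycProd A τ)).prod * cycProd A τ j)

/-- The determinant of a (Hermitian) quaternion matrix: the common value of all
row and column determinants. -/
def Hdet : {m : ℕ} → Matrix (Fin m) (Fin m) ℍ[ℝ] → ℍ[ℝ]
  | 0, _ => 1
  | _ + 1, A => rdet A 0

/-- The principal submatrix of `M` with rows and columns indexed by `β`. -/
def principalSub {n : ℕ} (M : Matrix (Fin n) (Fin n) ℍ[ℝ]) (β : Finset (Fin n)) :
    Matrix (Fin β.card) (Fin β.card) ℍ[ℝ] :=
  M.submatrix (⇑(β.orderEmbOfFin rfl)) (⇑(β.orderEmbOfFin rfl))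

/-- The position of `i` inside the increasing enumeration of the finset `β`. -/
def posIn {n : ℕ} (β : Finset (Fin n)) {i : Fin n} (h : i ∈ β) : Fin β.card :=
  (β.orderIsoOfFin rfl).symm ⟨i, h⟩

/-- `Σ_{β ∈ J_{s,n}{i}} cdet_i (M_β^β)`: the sum, over all subsets `β` of
cardinality `s` containing `i`, of the column determinants of the principal
submatrix `M_β^β` taken at the position of `i` within `β`. -/
def cdetPM {n : ℕ} (M : Matrix (Fin n) (Fin n) ℍ[ℝ]) (s : ℕ) (i : Fin n) : ℍ[ℝ] :=
  ∑ β ∈ ((Finset.powersetCard s (Finset.univ : Finset (Fin n))).filter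
      fun β => i ∈ β).attach,
    cdet (principalSub M β.1) (posIn β.1 (Finset.mem_filter.mp β.2).2)

/-- `Σ_{α ∈ I_{s,n}{j}} rdet_j (M_α^α)`: the sum, over all subsets `α` of
cardinality `s` containing `j`, of the row determinants of the principal
submatrix `M_α^α` taken at the position of `j` within `α`. -/
def rdetPM {n : ℕ} (M : Matrix (Fin n) (Fin n) ℍ[ℝ]) (s : ℕ) (j : Fin n) : ℍ[ℝ] :=
  ∑ α ∈ ((Finset.powersetCard s (Finset.univ : Finset (Fin n))).filter
      fun α => j ∈ α).attach,
    rdet (principalSub M α.1) (posIn α.1 (Finset.mem_filter.mp α.2).2)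

/-- The sum of all principal minors of `M` of order `r`. -/
def minorSum {n : ℕ} (M : Matrix (Fin n) (Fin n) ℍ[ℝ]) (r : ℕ) : ℍ[ℝ] :=
  ∑ β ∈ Finset.powersetCard r (Finset.univ : Finset (Fin n)),
    Hdet (principalSub M β)

/-- The (column) rank of a quaternion matrix: the dimension of the span of its
columns as a right `ℍ`-vector space. -/
def qrank {m n : ℕ} (A : Matrix (Fin m) (Fin n) ℍ[ℝ]) : ℕ :=
  Module.finrank ℍ[ℝ]ᵐᵒᵖ
    (Submodule.span ℍ[ℝ]ᵐᵒᵖ (Set.range Aᵀ) : Submodule ℍ[ℝ]ᵐᵒᵖ (Fin m → ℍ[ℝ]))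

/-- `Ind A = k`: `k` is the smallest nonnegative integer with
`rank A^(k+1) = rank A^k`. -/
def isInd {n : ℕ} (A : Matrix (Fin n) (Fin n) ℍ[ℝ]) (k : ℕ) : Prop :=
  qrank (A ^ (k + 1)) = qrank (A ^ k) ∧
    ∀ l < k, qrank (A ^ (l + 1)) ≠ qrank (A ^ l)

/-- `X` is a Drazin inverse of `A` (relative to the index `k`). -/
def isDrazin {n : ℕ} (A X : Matrix (Fin n) (Fin n) ℍ[ℝ]) (k : ℕ) : Prop :=
  A ^ (k + 1) * X = A ^ k ∧ X * A * X = X ∧ A * X = X * A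

end


/-! ### Auxiliary development -/

noncomputable section AuxDev

open Equiv Function

variable {n : ℕ}

private lemma bool_eq_of_iff {a b : Bool} (h : a = true ↔ b = true) : a = b := by
  cases a <;> cases b <;> simp_all

private lemma perm_mp_pos (σ : Equiv.Perm (Fin n)) (x : Fin n) :
    0 < Function.minimalPeriod (⇑σ) x := by
  apply Function.minimalPeriod_pos_of_mem_periodicPts
  refine Function.mk_mem_periodicPts (orderOf_pos σ) ?_
  show (⇑σ)^[orderOf σ] x = x
  rw [Equiv.Perm.iterate_eq_pow, pow_orderOf_eq_one]
  rfl

private lemma perm_mp_le (σ : Equiv.Perm (Fin n)) (x : Fin n) :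
    Function.minimalPeriod (⇑σ) x ≤ n := by
  classical
  have hinj := Function.iterate_injOn_Iio_minimalPeriod (f := ⇑σ) (x := x)
  have hcard : ((Finset.range (Function.minimalPeriod (⇑σ) x)).image
      (fun k => (⇑σ)^[k] x)).card = Function.minimalPeriod (⇑σ) x := by
    rw [Finset.card_image_of_injOn, Finset.card_range]
    intro a ha b hb hab
    exact hinj (Finset.mem_range.mp ha) (Finset.mem_range.mp hb) hab
  calc Function.minimalPeriod (⇑σ) x = _ := hcard.symm
    _ ≤ Fintype.card (Fin n) := Finset.card_le_univ _
    _ = n := Fintype.card_fin n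

private lemma iterate_back (σ : Equiv.Perm (Fin n)) {x y : Fin n} {t : ℕ}
    (h : (⇑σ)^[t] x = y) : ∃ s : ℕ, (⇑σ)^[s] y = x := by
  set p := Function.minimalPeriod (⇑σ) x with hpdef
  have hp0 : 0 < p := perm_mp_pos σ x
  refine ⟨p - t % p, ?_⟩
  have h1 : (⇑σ)^[p - t % p] y = (⇑σ)^[p - t % p + t] x := by
    rw [Function.iterate_add_apply, h]
  have h2 : p - t % p + t = p * (1 + t / p) := by
    have hq : p * (t / p) + t % p = t := Nat.div_add_mod t p
    have h3 : t % p < p := Nat.mod_lt _ hp0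
    rw [Nat.mul_add, Nat.mul_one]
    omega
  have h4 : (⇑σ)^[p * (1 + t / p)] x = x :=
    (Function.isPeriodicPt_minimalPeriod (⇑σ) x).mul_const (1 + t / p)
  rw [h1, h2, h4]

private lemma isLeaderB_iff (σ : Equiv.Perm (Fin n)) (x : Fin n) :
    isLeaderB σ x = true ↔ ∀ t : ℕ, x ≤ (⇑σ)^[t] x := by
  constructor
  · intro h t
    have h' : ∀ s < n, x ≤ (⇑σ)^[s] x := by
      intro s hs
      have := List.all_eq_true.mp h s (List.mem_range.mpr hs)
      exact of_decide_eq_true this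
    rw [← Function.iterate_mod_minimalPeriod_eq]
    exact h' _ (lt_of_lt_of_le (Nat.mod_lt _ (perm_mp_pos σ x)) (perm_mp_le σ x))
  · intro h
    apply List.all_eq_true.mpr
    intro s _
    exact decide_eq_true (h s)

private lemma inCycleB_iff (σ : Equiv.Perm (Fin n)) (i x : Fin n) :
    inCycleB σ i x = true ↔ ∃ t : ℕ, (⇑σ)^[t] i = x := by
  constructor
  · intro h
    obtain ⟨s, _, hs⟩ := List.any_eq_true.mp h
    exact ⟨s, of_decide_eq_true hs⟩
  · rintro ⟨t, ht⟩
    apply List.any_eq_true.mpr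
    refine ⟨t % Function.minimalPeriod (⇑σ) i, ?_, ?_⟩
    · exact List.mem_range.mpr
        (lt_of_lt_of_le (Nat.mod_lt _ (perm_mp_pos σ i)) (perm_mp_le σ i))
    · apply decide_eq_true
      rw [Function.iterate_mod_minimalPeriod_eq]
      exact ht

private lemma isLeaderB_of_fixed {σ : Equiv.Perm (Fin n)} {x : Fin n}
    (h : σ x = x) : isLeaderB σ x = true := by
  apply (isLeaderB_iff σ x).mpr
  intro t
  have : (⇑σ)^[t] x = x := Function.IsFixedPt.iterate h t
  rw [this]

private lemma leader_inCycle_le {σ : Equiv.Perm (Fin n)} {i x : Fin n}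
    (hl : isLeaderB σ x = true) (hc : inCycleB σ i x = true) : x ≤ i := by
  obtain ⟨t, ht⟩ := (inCycleB_iff σ i x).mp hc
  obtain ⟨s, hs⟩ := iterate_back σ ht
  have := (isLeaderB_iff σ x).mp hl s
  rwa [hs] at this

/-- The increasing list of all cycle leaders of `σ`. -/
def fullLeaders (σ : Equiv.Perm (Fin n)) : List (Fin n) :=
  (List.finRange n).filter fun x => isLeaderB σ x

/-- Row-determinant-like sum over all cycle leaders. -/
def FF (A : Matrix (Fin n) (Fin n) ℍ[ℝ]) : ℍ[ℝ] :=
  ∑ σ : Equiv.Perm (Fin n),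
    ((Equiv.Perm.sign σ : ℤ) : ℍ[ℝ]) * ((fullLeaders σ).map (cycProd A σ)).prod

private lemma fullLeaders_nodup (σ : Equiv.Perm (Fin n)) : (fullLeaders σ).Nodup :=
  (List.nodup_finRange n).filter _

private lemma mem_fullLeaders {σ : Equiv.Perm (Fin n)} {x : Fin n} :
    x ∈ fullLeaders σ ↔ isLeaderB σ x = true := by
  simp [fullLeaders, List.mem_filter, List.mem_finRange]

private lemma fullLeaders_eq_cons {m : ℕ} (σ : Equiv.Perm (Fin (m + 1))) :
    fullLeaders σ = 0 :: leaders σ 0 := by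
  have h0lead : isLeaderB σ 0 = true := (isLeaderB_iff σ 0).mpr fun t => Fin.zero_le _
  have h0cyc : inCycleB σ 0 0 = true := (inCycleB_iff σ 0 0).mpr ⟨0, rfl⟩
  have c1 : (isLeaderB σ 0 && !inCycleB σ 0 0) = false := by rw [h0lead, h0cyc]; rfl
  unfold fullLeaders leaders
  rw [List.finRange_succ, List.filter_cons, List.filter_cons]
  simp only [h0lead, h0cyc, Bool.not_true, Bool.and_false, Bool.true_and,
    Bool.false_eq_true, if_false, if_true]
  congr 1
  apply (List.filter_congr ?_).symm
  intro x hx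
  obtain ⟨y, _, rfl⟩ := List.mem_map.mp hx
  cases hL : isLeaderB σ (Fin.succ y)
  · simp
  · have : inCycleB σ 0 (Fin.succ y) = false := by
      by_contra hcon
      have hc : inCycleB σ 0 (Fin.succ y) = true := by
        cases h : inCycleB σ 0 (Fin.succ y)
        · exact absurd h hcon
        · rfl
      have := leader_inCycle_le hL hc
      have : Fin.succ y = 0 := le_antisymm this (Fin.zero_le _)
      exact Fin.succ_ne_zero y this
    simp [this]

private lemma Hdet_eq_FF : ∀ {m : ℕ} (A : Matrix (Fin m) (Fin m) ℍ[ℝ]), Hdet A = FF A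
  | 0, A => by
    haveI : Subsingleton (Equiv.Perm (Fin 0)) :=
      ⟨fun a b => Equiv.ext fun x => x.elim0⟩
    have : FF A = ((Equiv.Perm.sign (1 : Equiv.Perm (Fin 0)) : ℤ) : ℍ[ℝ]) *
        ((fullLeaders (1 : Equiv.Perm (Fin 0))).map (cycProd A 1)).prod :=
      Fintype.sum_subsingleton _ 1
    rw [show Hdet A = 1 from rfl, this]
    simp [fullLeaders]
  | (m + 1), A => by
    show rdet A 0 = FF A
    unfold rdet FF
    refine Finset.sum_congr rfl fun σ _ => ?_
    rw [fullLeaders_eq_cons σ, List.map_cons, List.prod_cons]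

private lemma coe_central_list {α : Type} (L : List α) (c : α → ℝ) (g : α → ℍ[ℝ]) :
    (L.map fun x => ((c x : ℝ) : ℍ[ℝ]) * g x).prod
      = (((L.map c).prod : ℝ) : ℍ[ℝ]) * (L.map g).prod := by
  induction L with
  | nil => simp
  | cons a L ih =>
    simp only [List.map_cons, List.prod_cons, ih, Quaternion.coe_mul]
    rw [mul_assoc, mul_assoc]
    congr 1
    rw [← mul_assoc, ← Quaternion.coe_commutes, mul_assoc]

private lemma pow_list_sum {α : Type} (L : List α) (g : α → ℕ) (c : ℝ) :
    (L.map fun x => c ^ g x).prod = c ^ (L.map g).sum := by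
  induction L with
  | nil => simp
  | cons a L ih => simp [ih, pow_add]

private lemma cycProd_fixed {B : Matrix (Fin n) (Fin n) ℍ[ℝ]} {σ : Equiv.Perm (Fin n)}
    {x : Fin n} (h : σ x = x) : cycProd B σ x = B x x := by
  have hp : Function.minimalPeriod (⇑σ) x = 1 :=
    Function.minimalPeriod_eq_one_iff_isFixedPt.mpr h
  simp [cycProd, hp, List.range_succ, List.range_zero, h]

private lemma cycProd_neg (B : Matrix (Fin n) (Fin n) ℍ[ℝ]) (σ : Equiv.Perm (Fin n))
    (x : Fin n) :
    cycProd (-B) σ x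
      = ((((-1 : ℝ) ^ Function.minimalPeriod (⇑σ) x : ℝ)) : ℍ[ℝ]) * cycProd B σ x := by
  unfold cycProd
  have : ((List.range (Function.minimalPeriod (⇑σ) x)).map
      (fun t => (-B) ((⇑σ)^[t] x) ((⇑σ)^[t + 1] x)))
      = (List.range (Function.minimalPeriod (⇑σ) x)).map
        (fun t => (((-1 : ℝ) : ℍ[ℝ])) * B ((⇑σ)^[t] x) ((⇑σ)^[t + 1] x)) := by
    apply List.map_congr_left
    intro s _
    simp [Matrix.neg_apply]
  rw [this, coe_central_list]
  congr 2
  rw [List.map_const']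
  simp

private lemma sum_minimalPeriod_leaders (σ : Equiv.Perm (Fin n)) :
    ((fullLeaders σ).map fun l => Function.minimalPeriod (⇑σ) l).sum = n := by
  classical
  -- the leader of the cycle of x
  have hne : ∀ x : Fin n, (Finset.univ.filter fun y => inCycleB σ x y = true).Nonempty :=
    fun x => ⟨x, Finset.mem_filter.mpr ⟨Finset.mem_univ _,
      (inCycleB_iff σ x x).mpr ⟨0, rfl⟩⟩⟩
  set lead : Fin n → Fin n :=
    fun x => (Finset.univ.filter fun y => inCycleB σ x y = true).min' (hne x) with hlead
  have hcyc_trans : ∀ {x y z : Fin n}, inCycleB σ x y = true → inCycleB σ y z = true →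
      inCycleB σ x z = true := by
    intro x y z h1 h2
    obtain ⟨t1, ht1⟩ := (inCycleB_iff σ x y).mp h1
    obtain ⟨t2, ht2⟩ := (inCycleB_iff σ y z).mp h2
    exact (inCycleB_iff σ x z).mpr ⟨t2 + t1, by rw [Function.iterate_add_apply, ht1, ht2]⟩
  have hcyc_symm : ∀ {x y : Fin n}, inCycleB σ x y = true → inCycleB σ y x = true := by
    intro x y h1
    obtain ⟨t1, ht1⟩ := (inCycleB_iff σ x y).mp h1
    obtain ⟨s, hs⟩ := iterate_back σ ht1
    exact (inCycleB_iff σ y x).mpr ⟨s, hs⟩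
  have hlead_mem : ∀ x, inCycleB σ x (lead x) = true := fun x =>
    (Finset.mem_filter.mp ((Finset.univ.filter
      fun y => inCycleB σ x y = true).min'_mem (hne x))).2
  have hlead_leader : ∀ x, isLeaderB σ (lead x) = true := by
    intro x
    apply (isLeaderB_iff σ (lead x)).mpr
    intro t
    apply Finset.min'_le
    refine Finset.mem_filter.mpr ⟨Finset.mem_univ _, ?_⟩
    exact hcyc_trans (hlead_mem x) ((inCycleB_iff σ _ _).mpr ⟨t, rfl⟩)
  have hlead_eq : ∀ {l x : Fin n}, isLeaderB σ l = true → inCycleB σ l x = true →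
      lead x = l := by
    intro l x hl hlx
    have hsame : (Finset.univ.filter fun y => inCycleB σ x y = true)
        = Finset.univ.filter fun y => inCycleB σ l y = true := by
      ext y
      simp only [Finset.mem_filter, Finset.mem_univ, true_and]
      exact ⟨fun h => hcyc_trans hlx h, fun h => hcyc_trans (hcyc_symm hlx) h⟩
    rw [hlead]
    simp only [hsame]
    apply le_antisymm
    · apply Finset.min'_le
      refine Finset.mem_filter.mpr ⟨Finset.mem_univ _, (inCycleB_iff σ l l).mpr ⟨0, rfl⟩⟩
    · apply Finset.le_min'
      intro y hy
      exact leader_inCycle_le hl (hcyc_symm (Finset.mem_filter.mp hy).2)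
  -- orbit cardinality
  have horb : ∀ l : Fin n, (Finset.univ.filter fun y => inCycleB σ l y = true)
      = (Finset.range (Function.minimalPeriod (⇑σ) l)).image fun k => (⇑σ)^[k] l := by
    intro l
    ext y
    simp only [Finset.mem_filter, Finset.mem_univ, true_and, Finset.mem_image,
      Finset.mem_range]
    constructor
    · intro h
      obtain ⟨t, ht⟩ := (inCycleB_iff σ l y).mp h
      exact ⟨t % Function.minimalPeriod (⇑σ) l, Nat.mod_lt _ (perm_mp_pos σ l),
        by rw [Function.iterate_mod_minimalPeriod_eq]; exact ht⟩
    · rintro ⟨k, _, hk⟩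
      exact (inCycleB_iff σ l y).mpr ⟨k, hk⟩
  have horbcard : ∀ l : Fin n,
      (Finset.univ.filter fun y => inCycleB σ l y = true).card
        = Function.minimalPeriod (⇑σ) l := by
    intro l
    rw [horb l, Finset.card_image_of_injOn, Finset.card_range]
    intro a ha b hb hab
    exact Function.iterate_injOn_Iio_minimalPeriod
      (Finset.mem_range.mp ha) (Finset.mem_range.mp hb) hab
  -- fiberwise counting
  have hmaps : ∀ x : Fin n, x ∈ Finset.univ → lead x ∈ (fullLeaders σ).toFinset :=
    fun x _ => List.mem_toFinset.mpr (mem_fullLeaders.mpr (hlead_leader x))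
  have key := Finset.card_eq_sum_card_fiberwise hmaps
  have hfib : ∀ l ∈ (fullLeaders σ).toFinset,
      (Finset.univ.filter fun x => lead x = l).card = Function.minimalPeriod (⇑σ) l := by
    intro l hl
    have hl' : isLeaderB σ l = true := mem_fullLeaders.mp (List.mem_toFinset.mp hl)
    rw [← horbcard l]
    congr 1
    ext x
    simp only [Finset.mem_filter, Finset.mem_univ, true_and]
    constructor
    · intro h
      rw [← h]
      exact hcyc_symm (hlead_mem x)
    · intro h
      exact hlead_eq hl' h
  rw [Finset.sum_congr rfl hfib] at key
  rw [← List.sum_toFinset _ (fullLeaders_nodup σ), ← key, Finset.card_univ, Fintype.card_fin]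

private lemma Hdet_neg {m : ℕ} (C : Matrix (Fin m) (Fin m) ℍ[ℝ]) :
    Hdet (-C) = (-1 : ℍ[ℝ]) ^ m * Hdet C := by
  rw [Hdet_eq_FF, Hdet_eq_FF]
  unfold FF
  rw [Finset.mul_sum]
  refine Finset.sum_congr rfl fun σ _ => ?_
  have : (fullLeaders σ).map (cycProd (-C) σ)
      = (fullLeaders σ).map fun l =>
          ((((-1 : ℝ) ^ Function.minimalPeriod (⇑σ) l : ℝ)) : ℍ[ℝ]) * cycProd C σ l :=
    List.map_congr_left fun l _ => cycProd_neg C σ l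
  rw [this, coe_central_list, pow_list_sum, sum_minimalPeriod_leaders]
  have hcast : ((((-1 : ℝ) ^ m : ℝ)) : ℍ[ℝ]) = (-1 : ℍ[ℝ]) ^ m := by
    push_cast
    rfl
  rw [hcast, ← mul_assoc, ← mul_assoc]
  congr 1
  exact ((Commute.neg_one_left _).pow_left m).eq.symm

private lemma expand_prod {α : Type} [DecidableEq α] (u : α → ℝ) (v : α → ℍ[ℝ]) :
    ∀ L : List α, L.Nodup →
      (L.map fun l => ((u l : ℝ) : ℍ[ℝ]) + v l).prod
        = ∑ s ∈ L.toFinset.powerset,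
            ((((L.filter fun x => x ∉ s).map u).prod : ℝ) : ℍ[ℝ]) *
              ((L.filter fun x => x ∈ s).map v).prod
  | [], _ => by simp
  | a :: L, h => by
    classical
    obtain ⟨ha, hL⟩ := List.nodup_cons.mp h
    have ih := expand_prod u v L hL
    have hato : a ∉ L.toFinset := fun hc => ha (List.mem_toFinset.mp hc)
    have h1 : ∀ s ∈ L.toFinset.powerset,
        (((((a :: L).filter fun x => x ∉ s).map u).prod : ℝ) : ℍ[ℝ]) *
            (((a :: L).filter fun x => x ∈ s).map v).prod
          = ((u a : ℝ) : ℍ[ℝ]) *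
              (((((L.filter fun x => x ∉ s).map u).prod : ℝ) : ℍ[ℝ]) *
                ((L.filter fun x => x ∈ s).map v).prod) := by
      intro s hs
      have has : a ∉ s := fun hc => hato (Finset.mem_powerset.mp hs hc)
      rw [List.filter_cons_of_pos (by simpa using has),
        List.filter_cons_of_neg (by simpa using has),
        List.map_cons, List.prod_cons, Quaternion.coe_mul, mul_assoc]
    have h2 : ∀ s ∈ L.toFinset.powerset,
        (((((a :: L).filter fun x => x ∉ insert a s).map u).prod : ℝ) : ℍ[ℝ]) *
            (((a :: L).filter fun x => x ∈ insert a s).map v).prod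
          = v a *
              (((((L.filter fun x => x ∉ s).map u).prod : ℝ) : ℍ[ℝ]) *
                ((L.filter fun x => x ∈ s).map v).prod) := by
      intro s hs
      have hains : a ∈ insert a s := Finset.mem_insert_self a s
      have hnotmem : ∀ x ∈ L, (decide (x ∉ insert a s)) = (decide (x ∉ s)) := by
        intro x hx
        have hxa : x ≠ a := fun hc => ha (hc ▸ hx)
        simp [Finset.mem_insert, hxa]
      have hmem : ∀ x ∈ L, (decide (x ∈ insert a s)) = (decide (x ∈ s)) := by
        intro x hx
        have hxa : x ≠ a := fun hc => ha (hc ▸ hx)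
        simp [Finset.mem_insert, hxa]
      rw [List.filter_cons_of_neg (by simpa using hains),
        List.filter_cons_of_pos (by simpa using hains),
        List.filter_congr hnotmem, List.filter_congr hmem,
        List.map_cons, List.prod_cons, ← mul_assoc, Quaternion.coe_commutes, mul_assoc]
    rw [List.map_cons, List.prod_cons, ih, List.toFinset_cons,
      Finset.sum_powerset_insert hato, add_mul, Finset.mul_sum, Finset.mul_sum]
    congr 1
    · exact Finset.sum_congr rfl fun s hs => (h1 s hs).symm
    · exact Finset.sum_congr rfl fun s hs => (h2 s hs).symm

private lemma cycProd_smul_sub (t : ℝ) (A : Matrix (Fin n) (Fin n) ℍ[ℝ])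
    (σ : Equiv.Perm (Fin n)) (l : Fin n) :
    cycProd ((t : ℍ[ℝ]) • (1 : Matrix (Fin n) (Fin n) ℍ[ℝ]) - A) σ l
      = (((if σ l = l then t else 0) : ℝ) : ℍ[ℝ]) + cycProd (-A) σ l := by
  by_cases h : σ l = l
  · rw [cycProd_fixed h, cycProd_fixed (B := -A) h, if_pos h]
    simp [Matrix.sub_apply, Matrix.smul_apply, smul_eq_mul, Matrix.one_apply_eq,
      Matrix.neg_apply, sub_eq_add_neg]
  · rw [if_neg h]
    rw [show (((0 : ℝ)) : ℍ[ℝ]) = 0 from rfl, zero_add]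
    unfold cycProd
    congr 1
    apply List.map_congr_left
    intro s _
    have hne : (⇑σ)^[s] l ≠ (⇑σ)^[s + 1] l := by
      rw [Function.iterate_succ_apply]
      intro hc
      exact h ((Function.Injective.iterate σ.injective s) hc).symm
    rw [Matrix.sub_apply, Matrix.smul_apply, Matrix.one_apply_ne hne]
    simp [Matrix.neg_apply]

private lemma filter_finRange_sorted (p : Fin n → Bool) :
    ((List.finRange n).filter p).Pairwise (· ≤ ·) :=
  List.Pairwise.filter p ((List.pairwise_lt_finRange n).imp le_of_lt)

private lemma restrict_sum (B : Matrix (Fin n) (Fin n) ℍ[ℝ]) (β : Finset (Fin n)) :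
    ∑ σ ∈ Finset.univ.filter (fun σ : Equiv.Perm (Fin n) => ∀ x, σ x ≠ x → x ∈ β),
        ((Equiv.Perm.sign σ : ℤ) : ℍ[ℝ]) *
          (((List.finRange n).filter fun x => isLeaderB σ x && decide (x ∈ β)).map
            (cycProd B σ)).prod
      = FF (principalSub B β) := by
  classical
  set f : Fin β.card ≃ {x // x ∈ β} := (β.orderIsoOfFin rfl).toEquiv with hf
  set emb : Fin β.card → Fin n := fun i => β.orderEmbOfFin rfl i with hemb
  have hembinj : Function.Injective emb := (β.orderEmbOfFin rfl).injective
  have hcoe : ∀ x : Fin β.card, ((f x : Fin n)) = emb x := fun x =>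
    β.coe_orderIsoOfFin_apply rfl x
  have hext_apply : ∀ (τ : Equiv.Perm (Fin β.card)) (x : Fin β.card),
      (τ.extendDomain f) (emb x) = emb (τ x) := by
    intro τ x
    have := Equiv.Perm.extendDomain_apply_image (e := τ) (f := f) x
    rwa [hcoe, hcoe] at this
  have hext_iter : ∀ (τ : Equiv.Perm (Fin β.card)) (k : ℕ) (x : Fin β.card),
      (⇑(τ.extendDomain f))^[k] (emb x) = emb ((⇑τ)^[k] x) := by
    intro τ k x
    induction k with
    | zero => rfl
    | succ k ih =>
      rw [Function.iterate_succ_apply', ih, hext_apply]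
      exact congrArg emb (Function.iterate_succ_apply' (⇑τ) k x).symm
  have hext_fix : ∀ (τ : Equiv.Perm (Fin β.card)) (y : Fin n), y ∉ β →
      (τ.extendDomain f) y = y := fun τ y hy =>
    Equiv.Perm.extendDomain_apply_not_subtype τ f hy
  have hperiod : ∀ (τ : Equiv.Perm (Fin β.card)) (x : Fin β.card),
      Function.minimalPeriod (⇑(τ.extendDomain f)) (emb x)
        = Function.minimalPeriod (⇑τ) x := by
    intro τ x
    apply le_antisymm
    · apply Function.IsPeriodicPt.minimalPeriod_le (perm_mp_pos τ x)
      show (⇑(τ.extendDomain f))^[_] (emb x) = emb x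
      rw [hext_iter, Function.iterate_minimalPeriod]
    · apply Function.IsPeriodicPt.minimalPeriod_le
        (perm_mp_pos (τ.extendDomain f) (emb x))
      show (⇑τ)^[_] x = x
      apply hembinj
      rw [← hext_iter, Function.iterate_minimalPeriod]
  have hleader : ∀ (τ : Equiv.Perm (Fin β.card)) (x : Fin β.card),
      isLeaderB (τ.extendDomain f) (emb x) = isLeaderB τ x := by
    intro τ x
    apply bool_eq_of_iff
    rw [isLeaderB_iff, isLeaderB_iff]
    constructor
    · intro h k
      have := h k
      rw [hext_iter] at this
      exact (β.orderEmbOfFin rfl).le_iff_le.mp this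
    · intro h k
      rw [hext_iter]
      exact (β.orderEmbOfFin rfl).le_iff_le.mpr (h k)
  have hrange : ∀ y : Fin n, y ∈ β ↔ ∃ x, emb x = y := by
    intro y
    constructor
    · intro hy
      have : y ∈ Set.range (β.orderEmbOfFin rfl) := by
        rw [Finset.range_orderEmbOfFin]
        exact hy
      obtain ⟨x, hx⟩ := this
      exact ⟨x, hx⟩
    · rintro ⟨x, rfl⟩
      exact β.orderEmbOfFin_mem rfl x
  have hcyc : ∀ (τ : Equiv.Perm (Fin β.card)) (x : Fin β.card),
      cycProd B (τ.extendDomain f) (emb x) = cycProd (principalSub B β) τ x := by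
    intro τ x
    unfold cycProd
    rw [hperiod]
    congr 1
    apply List.map_congr_left
    intro s _
    rw [hext_iter, hext_iter]
    rfl
  have hsel : ∀ τ : Equiv.Perm (Fin β.card),
      ((List.finRange n).filter fun y => isLeaderB (τ.extendDomain f) y && decide (y ∈ β))
        = (fullLeaders τ).map emb := by
    intro τ
    refine List.Perm.eq_of_pairwise' (r := (· ≤ ·)) ?_ ?_ ?_; rotate_right
    · apply List.perm_of_nodup_nodup_toFinset_eq
      · exact (List.nodup_finRange n).filter _
      · exact (fullLeaders_nodup τ).map hembinj
      · ext y
        simp only [List.mem_toFinset, List.mem_filter, List.mem_finRange, true_and,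
          List.mem_map, Bool.and_eq_true, decide_eq_true_eq]
        constructor
        · rintro ⟨hl, hy⟩
          obtain ⟨x, rfl⟩ := (hrange y).mp hy
          exact ⟨x, mem_fullLeaders.mpr (by rw [← hleader τ x]; exact hl), rfl⟩
        · rintro ⟨x, hx, rfl⟩
          exact ⟨by rw [hleader]; exact mem_fullLeaders.mp hx, (hrange _).mpr ⟨x, rfl⟩⟩
    · exact filter_finRange_sorted _
    · exact List.Pairwise.map emb
        (fun a b hab => (β.orderEmbOfFin rfl).monotone hab) (filter_finRange_sorted _)
  refine (Finset.sum_bij (fun (τ : Equiv.Perm (Fin β.card)) _ => τ.extendDomain f)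
    ?_ ?_ ?_ ?_).symm
  · intro τ _
    refine Finset.mem_filter.mpr ⟨Finset.mem_univ _, fun y hy => ?_⟩
    by_contra hyβ
    exact hy (hext_fix τ y hyβ)
  · intro τ₁ h₁ τ₂ h₂ hq
    have hq' : τ₁.extendDomain f = τ₂.extendDomain f := hq
    apply Equiv.ext
    intro x
    apply hembinj
    rw [← hext_apply τ₁ x, ← hext_apply τ₂ x, hq']
  · intro σ hσ
    have hfix : ∀ x, σ x ≠ x → x ∈ β := (Finset.mem_filter.mp hσ).2
    have hmemiff : ∀ x : Fin n, x ∈ β ↔ σ x ∈ β := by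
      intro x
      constructor
      · intro hx
        by_contra hcon
        have h1 : σ (σ x) = σ x := by
          by_contra h2
          exact hcon (hfix _ h2)
        have h3 := σ.injective h1
        rw [h3] at hcon
        exact hcon hx
      · intro hx
        by_contra hcon
        have h1 : σ x = x := by
          by_contra h2
          exact hcon (hfix _ h2)
        rw [h1] at hx
        exact hcon hx
    refine ⟨f.symm.permCongr (σ.subtypePerm fun x => (hmemiff x).symm), Finset.mem_univ _, ?_⟩
    apply Equiv.ext
    intro y
    by_cases hy : y ∈ β
    · rw [Equiv.Perm.extendDomain_apply_subtype _ f hy]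
      simp only [Equiv.permCongr_apply, Equiv.symm_symm, Equiv.symm_apply_apply,
        Equiv.apply_symm_apply, Equiv.Perm.subtypePerm_apply]
    · rw [hext_fix _ _ hy]
      have h1 : σ y = y := by
        by_contra h2
        exact hy (hfix _ h2)
      exact h1.symm
  · intro τ _
    rw [Equiv.Perm.sign_extendDomain, hsel τ, List.map_map]
    congr 1
    congr 1
    exact (List.map_congr_left fun x _ => (hcyc τ x).symm)

private lemma FF_expand (t : ℝ) (A : Matrix (Fin n) (Fin n) ℍ[ℝ]) :
    FF ((t : ℍ[ℝ]) • (1 : Matrix (Fin n) (Fin n) ℍ[ℝ]) - A)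
      = ∑ β ∈ (Finset.univ : Finset (Fin n)).powerset,
          ((t ^ (n - β.card) : ℝ) : ℍ[ℝ]) * FF (principalSub (-A) β) := by
  classical
  have hA : FF ((t : ℍ[ℝ]) • (1 : Matrix (Fin n) (Fin n) ℍ[ℝ]) - A)
      = ∑ σ : Equiv.Perm (Fin n), ∑ s ∈ ((fullLeaders σ).toFinset.powerset.filter
            fun s => ∀ x : Fin n, isLeaderB σ x = true → σ x ≠ x → x ∈ s),
          ((Equiv.Perm.sign σ : ℤ) : ℍ[ℝ]) *
            ((((((fullLeaders σ).filter fun x => x ∉ s).map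
                fun l => if σ l = l then t else 0).prod : ℝ) : ℍ[ℝ]) *
              (((fullLeaders σ).filter fun x => x ∈ s).map (cycProd (-A) σ)).prod) := by
    unfold FF
    refine Finset.sum_congr rfl fun σ _ => ?_
    rw [show (fullLeaders σ).map (cycProd ((t : ℍ[ℝ]) • 1 - A) σ)
        = (fullLeaders σ).map
            (fun l => (((if σ l = l then t else 0 : ℝ)) : ℍ[ℝ]) + cycProd (-A) σ l)
      from List.map_congr_left fun l _ => cycProd_smul_sub t A σ l]
    rw [expand_prod _ _ _ (fullLeaders_nodup σ), Finset.mul_sum]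
    refine (Finset.sum_filter_of_ne ?_).symm
    intro s _ hne x hlx hfx
    by_contra hxs
    apply hne
    have hmem : x ∈ (fullLeaders σ).filter fun y => decide (y ∉ s) :=
      List.mem_filter.mpr ⟨mem_fullLeaders.mpr hlx, by simpa using hxs⟩
    have h0 : (0 : ℝ) ∈ ((fullLeaders σ).filter fun y => decide (y ∉ s)).map
        fun l => if σ l = l then t else 0 :=
      List.mem_map.mpr ⟨x, hmem, by rw [if_neg hfx]⟩
    rw [List.prod_eq_zero h0]
    simp
  have hB : ∀ β : Finset (Fin n),
      ((t ^ (n - β.card) : ℝ) : ℍ[ℝ]) * FF (principalSub (-A) β)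
        = ∑ σ ∈ Finset.univ.filter (fun σ : Equiv.Perm (Fin n) => ∀ x, σ x ≠ x → x ∈ β),
            ((Equiv.Perm.sign σ : ℤ) : ℍ[ℝ]) *
              (((t ^ (n - β.card) : ℝ) : ℍ[ℝ]) *
                ((((List.finRange n).filter fun x => isLeaderB σ x && decide (x ∈ β)).map
                  (cycProd (-A) σ)).prod)) := by
    intro β
    rw [← restrict_sum (-A) β, Finset.mul_sum]
    refine Finset.sum_congr rfl fun σ _ => ?_
    rw [← mul_assoc, Quaternion.coe_commutes, mul_assoc]
  have hrecover : ∀ (β : Finset (Fin n)) (σ : Equiv.Perm (Fin n)),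
      (∀ x, σ x ≠ x → x ∈ β) →
      (β.filter fun y => isLeaderB σ y = true)
          ∪ Finset.univ.filter (fun x => σ x ≠ x) = β := by
    intro β σ hfix
    apply Finset.Subset.antisymm
    · intro x hx
      rcases Finset.mem_union.mp hx with h | h
      · exact (Finset.mem_filter.mp h).1
      · exact hfix x (Finset.mem_filter.mp h).2
    · intro x hx
      by_cases hfx : σ x = x
      · exact Finset.mem_union_left _ (Finset.mem_filter.mpr ⟨hx, isLeaderB_of_fixed hfx⟩)
      · exact Finset.mem_union_right _ (Finset.mem_filter.mpr ⟨Finset.mem_univ _, hfx⟩)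
  have hWPv : ∀ (β : Finset (Fin n)) (σ : Equiv.Perm (Fin n)), (∀ x, σ x ≠ x → x ∈ β) →
      ((((fullLeaders σ).filter fun x =>
            x ∉ β.filter (fun y => isLeaderB σ y = true)).map
          fun l => if σ l = l then t else 0).prod = t ^ (n - β.card))
        ∧ ((fullLeaders σ).filter fun x => x ∈ β.filter (fun y => isLeaderB σ y = true))
            = (List.finRange n).filter fun x => isLeaderB σ x && decide (x ∈ β) := by
    intro β σ hfix
    have hssub : ∀ {x : Fin n}, x ∈ β.filter (fun y => isLeaderB σ y = true) → x ∈ β :=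
      fun hx => (Finset.mem_filter.mp hx).1
    constructor
    · have hl1 : (fullLeaders σ).filter
          (fun x => decide (x ∉ β.filter (fun y => isLeaderB σ y = true)))
          = (List.finRange n).filter fun x => decide (x ∉ β) := by
        unfold fullLeaders
        rw [List.filter_filter]
        apply List.filter_congr
        intro x _
        apply bool_eq_of_iff
        simp only [Bool.and_eq_true, decide_eq_true_eq]
        constructor
        · rintro ⟨hns, hl⟩ hxβ
          exact hns (Finset.mem_filter.mpr ⟨hxβ, hl⟩)
        · intro hnβ
          have hfx : σ x = x := by
            by_contra h2
            exact hnβ (hfix x h2)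
          exact ⟨fun hc => hnβ (hssub hc), isLeaderB_of_fixed hfx⟩
      rw [hl1]
      have hl2 : ((List.finRange n).filter fun x => decide (x ∉ β)).map
          (fun l => if σ l = l then t else 0)
          = ((List.finRange n).filter fun x => decide (x ∉ β)).map fun _ => t := by
        apply List.map_congr_left
        intro x hx
        have hxβ : x ∉ β := by simpa using (List.mem_filter.mp hx).2
        have hfx : σ x = x := by
          by_contra h2
          exact hxβ (hfix x h2)
        rw [if_pos hfx]
      rw [hl2, List.map_const', List.prod_replicate]
      congr 1
      have hnd : ((List.finRange n).filter fun x => decide (x ∉ β)).Nodup :=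
        (List.nodup_finRange n).filter _
      have hto : ((List.finRange n).filter fun x => decide (x ∉ β)).toFinset = βᶜ := by
        rw [List.toFinset_filter, List.toFinset_finRange]
        ext y
        simp [Finset.mem_compl]
      rw [← List.toFinset_card_of_nodup hnd, hto, Finset.card_compl, Fintype.card_fin]
    · unfold fullLeaders
      rw [List.filter_filter]
      apply List.filter_congr
      intro x _
      apply bool_eq_of_iff
      simp only [Bool.and_eq_true, decide_eq_true_eq]
      constructor
      · rintro ⟨hxs, hl⟩
        exact ⟨hl, hssub hxs⟩
      · rintro ⟨hl, hxβ⟩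
        exact ⟨Finset.mem_filter.mpr ⟨hxβ, hl⟩, hl⟩
  rw [hA, Finset.sum_congr rfl fun β _ => hB β]
  rw [Finset.sum_sigma', Finset.sum_sigma']
  refine (Finset.sum_bij
    (fun (p : Σ _ : Finset (Fin n), Equiv.Perm (Fin n)) _ =>
      (⟨p.2, p.1.filter fun y => isLeaderB p.2 y = true⟩
        : Σ _ : Equiv.Perm (Fin n), Finset (Fin n)))
    ?_ ?_ ?_ ?_).symm
  · rintro ⟨β, σ⟩ hp
    have hfix : ∀ x, σ x ≠ x → x ∈ β :=
      (Finset.mem_filter.mp (Finset.mem_sigma.mp hp).2).2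
    refine Finset.mem_sigma.mpr ⟨Finset.mem_univ _, Finset.mem_filter.mpr ⟨?_, ?_⟩⟩
    · apply Finset.mem_powerset.mpr
      intro x hx
      exact List.mem_toFinset.mpr (mem_fullLeaders.mpr (Finset.mem_filter.mp hx).2)
    · intro x hlx hfx
      exact Finset.mem_filter.mpr ⟨hfix x hfx, hlx⟩
  · rintro ⟨β₁, σ₁⟩ hp₁ ⟨β₂, σ₂⟩ hp₂ h
    have hfix₁ : ∀ x, σ₁ x ≠ x → x ∈ β₁ :=
      (Finset.mem_filter.mp (Finset.mem_sigma.mp hp₁).2).2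
    have hfix₂ : ∀ x, σ₂ x ≠ x → x ∈ β₂ :=
      (Finset.mem_filter.mp (Finset.mem_sigma.mp hp₂).2).2
    obtain ⟨h1, h2⟩ := Sigma.mk.inj_iff.mp h
    subst h1
    have h2' : (β₁.filter fun y => isLeaderB σ₁ y = true)
        = β₂.filter fun y => isLeaderB σ₁ y = true := eq_of_heq h2
    have e1 : β₁ = β₂ := by
      rw [← hrecover β₁ σ₁ hfix₁, ← hrecover β₂ σ₁ hfix₂, h2']
    rw [e1]
  · rintro ⟨σ, s⟩ hb
    have hb' := (Finset.mem_sigma.mp hb).2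
    have hs1 : s ⊆ (fullLeaders σ).toFinset :=
      Finset.mem_powerset.mp (Finset.mem_filter.mp hb').1
    have hadm : ∀ x : Fin n, isLeaderB σ x = true → σ x ≠ x → x ∈ s :=
      (Finset.mem_filter.mp hb').2
    refine ⟨⟨s ∪ Finset.univ.filter (fun x => σ x ≠ x), σ⟩,
      Finset.mem_sigma.mpr ⟨Finset.mem_powerset.mpr (Finset.subset_univ _),
        Finset.mem_filter.mpr ⟨Finset.mem_univ _, fun x hx =>
          Finset.mem_union_right _ (Finset.mem_filter.mpr ⟨Finset.mem_univ _, hx⟩)⟩⟩, ?_⟩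
    have hfe : ((s ∪ Finset.univ.filter fun x => σ x ≠ x).filter
        fun y => isLeaderB σ y = true) = s := by
      ext x
      simp only [Finset.mem_filter, Finset.mem_union, Finset.mem_univ, true_and]
      constructor
      · rintro ⟨h1 | h1, hl⟩
        · exact h1
        · exact hadm x hl h1
      · intro hxs
        exact ⟨Or.inl hxs, mem_fullLeaders.mp (List.mem_toFinset.mp (hs1 hxs))⟩
    exact congrArg (Sigma.mk σ) hfe
  · rintro ⟨β, σ⟩ hp
    have hfix : ∀ x, σ x ≠ x → x ∈ β :=
      (Finset.mem_filter.mp (Finset.mem_sigma.mp hp).2).2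
    obtain ⟨hW, hPv⟩ := hWPv β σ hfix
    show _ = ((Equiv.Perm.sign σ : ℤ) : ℍ[ℝ]) * _
    rw [hPv, hW]

end AuxDev

/-- the characteristic polynomial of a Hermitian quaternion
matrix: `det (tI − A) = tⁿ − d₁ t^{n−1} + ⋯ + (−1)ⁿ dₙ`, where `d_k` is the
sum of all principal minors of `A` of order `k`. -/
theorem stmt10 {n : ℕ} (A : Matrix (Fin n) (Fin n) ℍ[ℝ]) (hA : A.IsHermitian)
    (t : ℝ) :
    Hdet ((t : ℍ[ℝ]) • (1 : Matrix (Fin n) (Fin n) ℍ[ℝ]) - A) =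
      (t : ℍ[ℝ]) ^ n +
        ∑ k ∈ Finset.Icc 1 n, (-1 : ℍ[ℝ]) ^ k * minorSum A k * (t : ℍ[ℝ]) ^ (n - k) := by
  classical
  rw [Hdet_eq_FF, FF_expand]
  have hterm : ∀ β : Finset (Fin n),
      ((t ^ (n - β.card) : ℝ) : ℍ[ℝ]) * FF (principalSub (-A) β)
        = (-1 : ℍ[ℝ]) ^ β.card * Hdet (principalSub A β) * (t : ℍ[ℝ]) ^ (n - β.card) := by
    intro β
    have hps : principalSub (-A) β = -(principalSub A β) := rfl
    rw [← Hdet_eq_FF, hps, Hdet_neg, Quaternion.coe_commutes, Quaternion.coe_pow]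
  rw [Finset.sum_congr rfl fun β _ => hterm β, Finset.sum_powerset]
  have hcard : (Finset.univ : Finset (Fin n)).card = n := by simp
  rw [hcard]
  have hinner : ∀ j, (∑ β ∈ Finset.powersetCard j (Finset.univ : Finset (Fin n)),
      (-1 : ℍ[ℝ]) ^ β.card * Hdet (principalSub A β) * (t : ℍ[ℝ]) ^ (n - β.card))
      = (-1 : ℍ[ℝ]) ^ j * minorSum A j * (t : ℍ[ℝ]) ^ (n - j) := by
    intro j
    unfold minorSum
    rw [Finset.mul_sum, Finset.sum_mul]
    refine Finset.sum_congr rfl fun β hβ => ?_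
    rw [← (Finset.mem_powersetCard.mp hβ).2]
  rw [Finset.sum_congr rfl fun j _ => hinner j]
  have hsplit : Finset.range (n + 1) = insert 0 (Finset.Icc 1 n) := by
    ext j
    simp only [Finset.mem_range, Finset.mem_insert, Finset.mem_Icc]
    omega
  rw [hsplit, Finset.sum_insert (by simp)]
  have h0 : minorSum A 0 = 1 := by
    unfold minorSum
    rw [Finset.powersetCard_zero, Finset.sum_singleton]
    rfl
  rw [h0, pow_zero, one_mul, one_mul, Nat.sub_zero]
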